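/- Every rational function f ∈ E(y) can be decomposed as f = τ_y(g) − g + c with g ∈ E(y) and c ∈ E(y^m). Moreover, for any such decomposition, f is τ_y-summable in E(y) (i.e., f = τ_y(g') − g' for some g' ∈ E(y)) if and only if c = 0. -/

import Mathlib

open Polynomial

section QShiftAux
variable {E : Type*} [Field E]

lemma qaux_coeff_comp (a : E) (p : E[X]) (n : ℕ) :
    (p.comp (C a * X)).coeff n = a ^ n * p.coeff n := by
  induction p using Polynomial.induction_on' with
  | add p q hp hq => simp [add_comp, hp, hq, mul_add]
  | monomial k b =>
    rw [← C_mul_X_pow_eq_monomial, mul_comp, C_comp, pow_comp, X_comp, mul_pow, ← C_pow,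
      ← mul_assoc, ← C_mul]
    simp only [coeff_C_mul, coeff_X_pow]
    split_ifs with h
    · subst h; ring
    · ring

lemma qaux_comp_one (p : E[X]) : p.comp (C (1:E) * X) = p := by
  rw [map_one, one_mul, comp_X]

lemma qaux_comp_comp (a b : E) (p : E[X]) :
    (p.comp (C a * X)).comp (C b * X) = p.comp (C (a * b) * X) := by
  ext n
  rw [qaux_coeff_comp, qaux_coeff_comp, qaux_coeff_comp, mul_pow]
  ring

lemma qaux_comp_ne_zero {a : E} (ha : a ≠ 0) {p : E[X]} (hp : p ≠ 0) :
    p.comp (C a * X) ≠ 0 := by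
  intro h
  apply hp
  ext n
  have h2 := congrArg (fun r => Polynomial.coeff r n) h
  simp only [qaux_coeff_comp, coeff_zero] at h2
  exact (mul_eq_zero.mp h2).resolve_left (pow_ne_zero n ha)

lemma qaux_tau_algebraMap (q : E) (τy : RatFunc E ≃ₐ[E] RatFunc E)
    (hτy : τy RatFunc.X = RatFunc.C q * RatFunc.X) (p : E[X]) :
    τy (algebraMap E[X] (RatFunc E) p)
      = algebraMap E[X] (RatFunc E) (p.comp (C q * X)) := by
  have h : (τy.toAlgHom.comp (IsScalarTower.toAlgHom E E[X] (RatFunc E)))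
      = (IsScalarTower.toAlgHom E E[X] (RatFunc E)).comp (aeval (C q * X)) := by
    apply Polynomial.algHom_ext
    simp [RatFunc.algebraMap_X, RatFunc.algebraMap_C, hτy]
  have h2 := DFunLike.congr_fun h p
  simpa [← Polynomial.comp_eq_aeval] using h2

lemma qaux_tau_pow_algebraMap (q : E) (τy : RatFunc E ≃ₐ[E] RatFunc E)
    (hτy : τy RatFunc.X = RatFunc.C q * RatFunc.X) (j : ℕ) (p : E[X]) :
    (τy ^ j) (algebraMap E[X] (RatFunc E) p)
      = algebraMap E[X] (RatFunc E) (p.comp (C (q ^ j) * X)) := by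
  induction j with
  | zero => simp [pow_zero, comp_X]
  | succ j ih =>
    rw [pow_succ', AlgEquiv.mul_apply, ih, qaux_tau_algebraMap q τy hτy]
    congr 1
    ext n
    rw [qaux_coeff_comp, qaux_coeff_comp, qaux_coeff_comp, pow_succ']
    rw [mul_pow]
    ring

lemma qaux_algebraMap_eq_aeval (p : E[X]) :
    algebraMap E[X] (RatFunc E) p = aeval RatFunc.X p := by
  have h : (IsScalarTower.toAlgHom E E[X] (RatFunc E)) = aeval (RatFunc.X : RatFunc E) :=
    Polynomial.algHom_ext (by simp [RatFunc.algebraMap_X])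
  exact DFunLike.congr_fun h p

lemma qaux_tau_pow_m (m : ℕ) (q : E) (hqm : q ^ m = 1) (τy : RatFunc E ≃ₐ[E] RatFunc E)
    (hτy : τy RatFunc.X = RatFunc.C q * RatFunc.X) (x : RatFunc E) :
    (τy ^ m) x = x := by
  conv_lhs => rw [← RatFunc.num_div_denom x]
  rw [map_div₀, qaux_tau_pow_algebraMap q τy hτy, qaux_tau_pow_algebraMap q τy hτy, hqm,
    map_one, one_mul, comp_X, comp_X, RatFunc.num_div_denom]

lemma qaux_tau_fixes_adjoin (m : ℕ) (q : E) (hqm : q ^ m = 1)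
    (τy : RatFunc E ≃ₐ[E] RatFunc E)
    (hτy : τy RatFunc.X = RatFunc.C q * RatFunc.X) {c : RatFunc E}
    (hc : c ∈ IntermediateField.adjoin E {(RatFunc.X : RatFunc E) ^ m}) :
    τy c = c := by
  induction hc using IntermediateField.adjoin_induction with
  | mem x hx =>
    rw [Set.mem_singleton_iff] at hx
    subst hx
    rw [map_pow, hτy, mul_pow, ← map_pow, hqm, map_one, one_mul]
  | algebraMap x => exact τy.commutes x
  | add x y hx hy ihx ihy => rw [map_add, ihx, ihy]
  | inv x hx ihx => rw [map_inv₀, ihx]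
  | mul x y hx hy ihx ihy => rw [map_mul, ihx, ihy]

lemma qaux_expand_mem (m : ℕ) (r : E[X]) :
    algebraMap E[X] (RatFunc E) (expand E m r)
      ∈ IntermediateField.adjoin E {(RatFunc.X : RatFunc E) ^ m} := by
  rw [qaux_algebraMap_eq_aeval, expand_aeval]
  exact IntermediateField.algebra_adjoin_le_adjoin E _
    (Polynomial.aeval_mem_adjoin_singleton E _)

lemma qaux_decomp (m : ℕ) (hm : 0 < m) (p : E[X]) :
    ∃ r : ℕ → E[X], p = ∑ i ∈ Finset.range m, expand E m (r i) * X ^ i := by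
  induction p using Polynomial.induction_on' with
  | add p q hp hq =>
    obtain ⟨r1, h1⟩ := hp
    obtain ⟨r2, h2⟩ := hq
    refine ⟨fun i => r1 i + r2 i, ?_⟩
    simp [h1, h2, map_add, add_mul, Finset.sum_add_distrib]
  | monomial n a =>
    refine ⟨fun i => if i = n % m then C a * X ^ (n / m) else 0, ?_⟩
    rw [Finset.sum_eq_single (n % m)]
    · dsimp only
      rw [if_pos rfl, map_mul, expand_C, map_pow, expand_X, ← pow_mul, mul_assoc, ← pow_add,
        Nat.div_add_mod, C_mul_X_pow_eq_monomial]
    · intro i _ hi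
      dsimp only
      rw [if_neg hi, map_zero, zero_mul]
    · intro h
      exact absurd (Finset.mem_range.mpr (Nat.mod_lt n hm)) h

end QShiftAux

/-- Let `E` be a field of characteristic zero, `q ∈ E` a primitive `m`-th root of unity
(`q^m = 1` with `m` minimal), and let `τ_y` be the `E`-automorphism of `E(y)` with
`τ_y(y) = q·y`.  Every `f ∈ E(y)` decomposes as `f = τ_y(g) - g + c` with `g ∈ E(y)`
and `c ∈ E(y^m)`; moreover for any such decomposition, `f` is `τ_y`-summable in `E(y)`
iff `c = 0`. -/
theorem qshift_normal_form_root_of_unity (E : Type*) [Field E] [CharZero E]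
    (m : ℕ) (hm : 0 < m) (q : E) (hq : IsPrimitiveRoot q m)
    (τy : RatFunc E ≃ₐ[E] RatFunc E)
    (hτy : τy RatFunc.X = RatFunc.C q * RatFunc.X)
    (f : RatFunc E) :
    (∃ g c : RatFunc E,
        c ∈ IntermediateField.adjoin E {(RatFunc.X : RatFunc E) ^ m} ∧
        f = τy g - g + c) ∧
    (∀ g c : RatFunc E,
        c ∈ IntermediateField.adjoin E {(RatFunc.X : RatFunc E) ^ m} →
        f = τy g - g + c →
        ((∃ g' : RatFunc E, f = τy g' - g') ↔ c = 0)) := by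
  have hqm : q ^ m = 1 := hq.pow_eq_one
  constructor
  · -- existence of the decomposition
    set d := f.denom with hd
    have hd0 : d ≠ 0 := f.denom_ne_zero
    have hq0 : q ≠ 0 := hq.ne_zero hm.ne'
    have hfac : ∀ j : ℕ, d.comp (C (q ^ j) * X) ≠ 0 :=
      fun j => qaux_comp_ne_zero (pow_ne_zero j hq0) hd0
    set D := ∏ j ∈ Finset.range m, d.comp (C (q ^ j) * X) with hDdef
    have hD0 : D ≠ 0 := Finset.prod_ne_zero_iff.mpr fun j _ => hfac j
    have hDfix : D.comp (C q * X) = D := by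
      have h1 : D.comp (C q * X)
          = ∏ j ∈ Finset.range m, d.comp (C (q ^ (j + 1)) * X) := by
        rw [hDdef, Polynomial.comp_eq_aeval, map_prod]
        refine Finset.prod_congr rfl fun j _ => ?_
        rw [← Polynomial.comp_eq_aeval, qaux_comp_comp, ← pow_succ]
      have h2 : (∏ j ∈ Finset.range m, d.comp (C (q ^ (j + 1)) * X)) * d.comp (C (q ^ 0) * X)
          = D * d.comp (C (q ^ 0) * X) := by
        have e1 := Finset.prod_range_succ' (fun j => d.comp (C (q ^ j) * X)) m
        have e2 := Finset.prod_range_succ (fun j => d.comp (C (q ^ j) * X)) m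
        rw [← e1, e2, hqm, pow_zero, hDdef]
      rw [h1, mul_right_cancel₀ (hfac 0) h2]
    have hDvanish : ∀ n, ¬ m ∣ n → D.coeff n = 0 := by
      intro n hn
      by_contra h
      have h3 := congrArg (fun r => Polynomial.coeff r n) hDfix
      simp only [qaux_coeff_comp] at h3
      have hq1 : q ^ n = 1 := mul_right_cancel₀ h (by rw [h3, one_mul])
      exact hn ((hq.pow_eq_one_iff_dvd n).mp hq1)
    have hDexp : Polynomial.expand E m (Polynomial.contract m D) = D := by
      ext n
      rw [Polynomial.coeff_expand hm, Polynomial.coeff_contract hm.ne']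
      split_ifs with h
      · rw [Nat.div_mul_cancel h]
      · exact (hDvanish n h).symm
    have hDmem : algebraMap E[X] (RatFunc E) D
        ∈ IntermediateField.adjoin E {(RatFunc.X : RatFunc E) ^ m} := by
      rw [← hDexp]; exact qaux_expand_mem m _
    have hιD0 : algebraMap E[X] (RatFunc E) D ≠ 0 := RatFunc.algebraMap_ne_zero hD0
    obtain ⟨k, hk⟩ : ∃ k, m = k + 1 := ⟨m - 1, (Nat.succ_pred_eq_of_pos hm).symm⟩
    set T := ∏ j ∈ Finset.range k, d.comp (C (q ^ (j + 1)) * X) with hT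
    have hDT : D = T * d := by
      rw [hDdef, hk, Finset.prod_range_succ', pow_zero, qaux_comp_one]
    have hT0 : algebraMap E[X] (RatFunc E) T ≠ 0 :=
      RatFunc.algebraMap_ne_zero (Finset.prod_ne_zero_iff.mpr fun j _ => hfac (j + 1))
    have hιd0 : algebraMap E[X] (RatFunc E) d ≠ 0 := RatFunc.algebraMap_ne_zero hd0
    have hfT : algebraMap E[X] (RatFunc E) (f.num * T)
        * (algebraMap E[X] (RatFunc E) D)⁻¹ = f := by
      conv_rhs => rw [← RatFunc.num_div_denom f]
      rw [hDT, map_mul, map_mul, div_eq_mul_inv, mul_inv, ← mul_assoc,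
        mul_assoc ((algebraMap E[X] (RatFunc E)) f.num), mul_inv_cancel₀ hT0, mul_one]
    obtain ⟨r, hr⟩ := qaux_decomp m hm (f.num * T)
    set w := (algebraMap E[X] (RatFunc E) D)⁻¹ with hw
    set u := fun i : ℕ => algebraMap E[X] (RatFunc E) (expand E m (r i)) * w with hu
    have humem : ∀ i, u i ∈ IntermediateField.adjoin E {(RatFunc.X : RatFunc E) ^ m} :=
      fun i => mul_mem (qaux_expand_mem m _) (inv_mem hDmem)
    have hufix : ∀ i, τy (u i) = u i :=
      fun i => qaux_tau_fixes_adjoin m q hqm τy hτy (humem i)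
    have hfsum : f = ∑ i ∈ Finset.range m, u i * RatFunc.X ^ i := by
      rw [← hfT, hr, map_sum, Finset.sum_mul]
      refine Finset.sum_congr rfl fun i _ => ?_
      rw [map_mul, map_pow, RatFunc.algebraMap_X, hu]
      ring
    refine ⟨∑ i ∈ Finset.range m,
        if i = 0 then 0 else (RatFunc.C (q ^ i - 1))⁻¹ * (u i * RatFunc.X ^ i),
      u 0, humem 0, ?_⟩
    have hC : ∀ a : E, τy (RatFunc.C a) = RatFunc.C a := by
      intro a
      rw [← RatFunc.algebraMap_eq_C]
      exact τy.commutes a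
    rw [map_sum, ← Finset.sum_sub_distrib]
    have hterm : ∀ i ∈ Finset.range m,
        (τy (if i = 0 then 0 else (RatFunc.C (q ^ i - 1))⁻¹ * (u i * RatFunc.X ^ i))
          - (if i = 0 then 0 else (RatFunc.C (q ^ i - 1))⁻¹ * (u i * RatFunc.X ^ i)))
        = (if i = 0 then 0 else u i * RatFunc.X ^ i) := by
      intro i hi
      by_cases h0 : i = 0
      · simp [h0]
      · simp only [if_neg h0]
        have hne : q ^ i - 1 ≠ 0 :=
          sub_ne_zero.mpr
            (hq.pow_ne_one_of_pos_of_lt h0 (Finset.mem_range.mp hi))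
        have hCne : RatFunc.C (q ^ i - 1) ≠ 0 := by
          rw [← RatFunc.algebraMap_eq_C]
          exact fun h => hne ((algebraMap E (RatFunc E)).injective (by simpa using h))
        rw [map_mul, map_inv₀, hC, map_mul, hufix i, map_pow, hτy, mul_pow, ← map_pow,
          ← mul_sub, inv_mul_eq_iff_eq_mul₀ hCne, map_sub, map_one]
        ring
    rw [Finset.sum_congr rfl hterm, hfsum]
    have h0mem : (0:ℕ) ∈ Finset.range m := Finset.mem_range.mpr hm
    rw [← Finset.add_sum_erase _ (fun i => u i * RatFunc.X ^ i) h0mem,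
        ← Finset.add_sum_erase _
          (fun i => if i = 0 then 0 else u i * RatFunc.X ^ i) h0mem]
    have herase : ∑ i ∈ (Finset.range m).erase 0,
          (if i = 0 then 0 else u i * RatFunc.X ^ i)
        = ∑ i ∈ (Finset.range m).erase 0, u i * RatFunc.X ^ i :=
      Finset.sum_congr rfl fun i hi => if_neg (Finset.ne_of_mem_erase hi)
    rw [if_pos rfl, zero_add, herase, pow_zero, mul_one]
    ring
  · -- uniqueness part
    intro g c hc hfc
    constructor
    · rintro ⟨g', hg'⟩
      rw [hfc] at hg'
      have hch : c = τy (g' - g) - (g' - g) := by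
        rw [map_sub]
        linear_combination hg'
      have key : ∀ j : ℕ, (τy ^ j) c = c := by
        intro j
        induction j with
        | zero => simp
        | succ j ih =>
          rw [pow_succ', AlgEquiv.mul_apply, ih, qaux_tau_fixes_adjoin m q hqm τy hτy hc]
      have sum1 : ∑ j ∈ Finset.range m, (τy ^ j) c = m • c := by
        rw [Finset.sum_congr rfl fun j _ => key j, Finset.sum_const, Finset.card_range]
      have sum2 : ∑ j ∈ Finset.range m, (τy ^ j) c
          = (τy ^ m) (g' - g) - (τy ^ 0) (g' - g) := by
        rw [← Finset.sum_range_sub (fun j => (τy ^ j) (g' - g))]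
        refine Finset.sum_congr rfl fun j _ => ?_
        rw [hch, map_sub, pow_succ, AlgEquiv.mul_apply]
      have hzero : m • c = 0 := by
        rw [← sum1, sum2, qaux_tau_pow_m m q hqm τy hτy, pow_zero, AlgEquiv.one_apply, sub_self]
      haveI : CharZero (RatFunc E) :=
        charZero_of_injective_algebraMap (algebraMap E (RatFunc E)).injective
      have : (m : RatFunc E) * c = 0 := by rwa [← nsmul_eq_mul]
      rcases mul_eq_zero.mp this with h | h
      · exact absurd h (Nat.cast_ne_zero.mpr hm.ne')
      · exact h
    · rintro rfl
      exact ⟨g, by simpa using hfc⟩
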